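/- Let G be a graph with a proper edge coloring and minimum degree δ(G) ≥ 1. Then there exists a graph G' with a proper edge coloring such that: (1) |V(G)| ≤ |V(G')| ≤ 4·e(G)/δ(G) and every vertex of G' has degree between δ(G)/2 and δ(G); and (2) there is a color-preserving graph homomorphism ψ from G' to G, i.e., a homomorphism such that for every edge uv of G' the color of uv in G' equals the color of ψ(u)ψ(v) in G. In particular, if G' contains a rainbow cycle, then so does G. -/

import Mathlib

universe u v

private lemma L1aux (δ d : ℕ) (h1 : 0 < δ) (h0 : 0 < d) : d ≤ δ * ((d + δ - 1) / δ) := by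
  have h2 := Nat.div_add_mod (d + δ - 1) δ
  have h3 : (d + δ - 1) % δ < δ := Nat.mod_lt _ h1
  omega

private lemma L2aux (δ d : ℕ) : δ * ((d + δ - 1) / δ) ≤ d + δ - 1 := Nat.mul_div_le _ _

private lemma L3aux (δ d : ℕ) (h1 : 0 < δ) (hdd : δ ≤ d) :
    ((d + δ - 1) / δ) * ((δ + 1) / 2) ≤ d := by
  set k := (d + δ - 1) / δ with hk
  set c := (δ + 1) / 2 with hc
  have hc1 := Nat.div_add_mod (δ + 1) 2
  have hc2 : (δ + 1) % 2 < 2 := Nat.mod_lt _ (by omega)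
  have h5 : δ * k ≤ d + δ - 1 := L2aux δ d
  rcases Nat.lt_or_ge k 2 with hk2 | hk2
  · have : k * c ≤ 1 * c := Nat.mul_le_mul_right c (by omega)
    omega
  · have i1 : k * (2 * c) ≤ k * (δ + 1) := Nat.mul_le_mul_left k (by omega)
    have e1 : k * (2 * c) = 2 * (k * c) := by ring
    have e2 : k * (δ + 1) = δ * k + k := by ring
    have e3 : δ * (k - 2) + 2 * δ = δ * k := by
      have h : k - 2 + 2 = k := by omega
      calc δ * (k - 2) + 2 * δ = δ * (k - 2 + 2) := by ring
        _ = δ * k := by rw [h]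
    have i3 : k - 2 ≤ δ * (k - 2) := Nat.le_mul_of_pos_left _ h1
    omega

private lemma Lcount_upper (d k i : ℕ) (hk : 0 < k) :
    ((Finset.range d).filter (fun t => t % k = i)).card ≤ (d + k - 1) / k := by
  rcases Nat.eq_zero_or_pos d with hd | hd
  · subst hd; simp
  · rw [← Finset.card_range ((d + k - 1) / k)]
    apply Finset.card_le_card_of_injOn (fun t => t / k)
    · intro t ht
      simp only [Finset.mem_coe, Finset.mem_filter, Finset.mem_range] at ht ⊢
      rw [show d + k - 1 = d - 1 + k by omega]
      have h1 : t / k ≤ (d - 1) / k := Nat.div_le_div_right (by omega)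
      have h2 : (d - 1 + k) / k = (d - 1) / k + 1 := Nat.add_div_right _ hk
      omega
    · intro a ha b hb hab
      simp only [Finset.coe_filter, Set.mem_setOf_eq, Finset.mem_range] at ha hb
      have ha2 := Nat.div_add_mod a k
      have hb2 := Nat.div_add_mod b k
      simp only at hab
      have : k * (a / k) = k * (b / k) := by rw [hab]
      omega

private lemma Lcount_lower (d k i : ℕ) (hk : 0 < k) (hik : i < k) :
    d / k ≤ ((Finset.range d).filter (fun t => t % k = i)).card := by
  rw [← Finset.card_range (d / k)]
  apply Finset.card_le_card_of_injOn (fun q => i + k * q)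
  · intro q hq
    simp only [Finset.mem_coe, Finset.mem_range] at hq
    simp only [Finset.mem_coe, Finset.mem_filter, Finset.mem_range]
    constructor
    · have h1 : k * (q + 1) ≤ k * (d / k) := Nat.mul_le_mul_left k (by omega)
      have h2 : k * (d / k) ≤ d := Nat.mul_div_le d k
      have h3 : k * (q + 1) = k * q + k := by ring
      omega
    · rw [Nat.add_mul_mod_self_left]
      exact Nat.mod_eq_of_lt hik
  · intro a _ b _ hab
    simp only at hab
    have h1 : k * a = k * b := by omega
    exact Nat.eq_of_mul_eq_mul_left hk h1

private lemma Ldiv_le (δ d k : ℕ) (hk : 0 < k) (h : d ≤ k * δ) : (d + k - 1) / k ≤ δ := by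
  have h2 : d + k - 1 < k * (δ + 1) := by
    have : k * (δ + 1) = k * δ + k := by ring
    omega
  have h3 : k * (δ + 1) = (δ + 1) * k := by ring
  have := (Nat.div_lt_iff_lt_mul hk).mpr (h3 ▸ h2)
  omega

private lemma Ldiv_ge (δ d k c : ℕ) (hk : 0 < k) (h : k * c ≤ d) (hc : δ ≤ 2 * c) :
    δ ≤ 2 * (d / k) := by
  have h2 : c * k ≤ d := by rw [mul_comm]; exact h
  have : c ≤ d / k := (Nat.le_div_iff_mul_le hk).mpr h2
  omega

private lemma Lrainbow {V : Type u} {C : Type v} {G : SimpleGraph V} (φ : Sym2 V → C) :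
    ∀ (n : ℕ) (u : V) (w : G.Walk u u), w.length ≤ n → ¬ w.Nil →
      (w.edges.map φ).Nodup →
      ∃ (x : V) (w' : G.Walk x x), w'.IsCycle ∧ (w'.edges.map φ).Nodup := by
  classical
  intro n
  induction n with
  | zero =>
    intro u w hl hn _
    exact absurd (SimpleGraph.Walk.nil_iff_length_eq.mpr (Nat.le_zero.mp hl)) hn
  | succ n ih =>
    intro u w hl hn hcol
    by_cases hnd : w.support.tail.Nodup
    · exact ⟨u, w, ⟨⟨⟨hcol.of_map⟩, fun h => hn (SimpleGraph.Walk.nil_iff_eq_nil.mpr h)⟩, hnd⟩, hcol⟩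
    · rw [← List.exists_duplicate_iff_not_nodup] at hnd
      obtain ⟨x, hdup⟩ := hnd
      rw [List.duplicate_iff_two_le_count] at hdup
      have hx : x ∈ w.support := by
        rw [SimpleGraph.Walk.support_eq_cons]
        exact List.mem_cons_of_mem _ (List.count_pos_iff.mp (by omega))
      set r := w.rotate x hx with hr
      have hperm : List.Perm r.edges w.edges := (w.rotate_edges x hx).perm
      have hrcol : (r.edges.map φ).Nodup := ((hperm.map φ).nodup_iff).mpr hcol
      have hrtail : List.Perm r.support.tail w.support.tail := (w.support_rotate x hx).perm
      have hrcount : 2 ≤ r.support.tail.count x := by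
        rw [hrtail.count_eq]; exact hdup
      have hrlen : r.length = w.length := by
        have h1 := r.length_support
        have h2 := w.length_support
        have h3 : r.support.length = w.support.length := by
          rw [r.support_eq_cons, w.support_eq_cons]
          rw [List.length_cons, List.length_cons, hrtail.length_eq]
        omega
      have hrn : ¬ r.Nil := by
        rw [SimpleGraph.Walk.not_nil_iff_lt_length] at hn ⊢
        omega
      obtain ⟨y, hadj, q, hq⟩ := SimpleGraph.Walk.not_nil_iff.mp hrn
      have hqsupp : r.support.tail = q.support := by rw [hq]; simp
      have hqcount : 2 ≤ q.support.count x := by rwa [hqsupp] at hrcount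
      have hxq : x ∈ q.support := List.count_pos_iff.mp (by omega)
      set t := q.takeUntil x hxq with ht
      have hredge : r.edges.Nodup := hrcol.of_map
      have hredge' : r.edges = s(x, y) :: q.edges := by rw [hq]; simp
      have hqnodup : q.edges.Nodup := by
        rw [hredge'] at hredge; exact (List.nodup_cons.mp hredge).2
      have hxyq : s(x, y) ∉ q.edges := by
        rw [hredge'] at hredge; exact (List.nodup_cons.mp hredge).1
      have hte : t.edges.Nodup := (SimpleGraph.Walk.IsTrail.takeUntil ⟨hqnodup⟩ hxq).edges_nodup
      have htsub : t.edges ⊆ q.edges := q.edges_takeUntil_subset hxq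
      have htlen : t.length < q.length := by
        by_contra hle
        push_neg at hle
        have hspec := q.take_spec hxq
        have hlen2 := congrArg SimpleGraph.Walk.length hspec
        rw [SimpleGraph.Walk.length_append] at hlen2
        rw [← ht] at hlen2
        have hsupp : q.support = t.support ++ (q.dropUntil x hxq).support.tail := by
          rw [← SimpleGraph.Walk.support_append, hspec]
        have hdnil : (q.dropUntil x hxq).support.tail = [] := by
          have h5 := (q.dropUntil x hxq).length_support
          have h6 : (q.dropUntil x hxq).support.tail.length = 0 := by
            have h9 := (q.dropUntil x hxq).support_eq_cons
            rw [h9, List.length_cons] at h5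
            omega
          exact List.length_eq_zero_iff.mp h6
        have h7 := q.count_support_takeUntil_eq_one hxq
        rw [hsupp, hdnil, List.append_nil] at hqcount
        rw [← ht] at h7
        omega
      have hw2len : (SimpleGraph.Walk.cons hadj t).length ≤ n := by
        rw [SimpleGraph.Walk.length_cons]
        have h8 : r.length = q.length + 1 := by rw [hq]; simp
        omega
      have hw2sub : (SimpleGraph.Walk.cons hadj t).edges ⊆ r.edges := by
        rw [SimpleGraph.Walk.edges_cons, hredge']
        intro e he
        rcases List.mem_cons.mp he with h | h
        · exact List.mem_cons.mpr (Or.inl h)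
        · exact List.mem_cons.mpr (Or.inr (htsub h))
      have hw2nodup : (SimpleGraph.Walk.cons hadj t).edges.Nodup := by
        rw [SimpleGraph.Walk.edges_cons]
        exact List.nodup_cons.mpr ⟨fun h => hxyq (htsub h), hte⟩
      have hw2col : ((SimpleGraph.Walk.cons hadj t).edges.map φ).Nodup := by
        refine List.Nodup.map_on ?_ hw2nodup
        intro e1 h1 e2 h2 hfe
        exact List.inj_on_of_nodup_map hrcol (hw2sub h1) (hw2sub h2) hfe
      exact ih x (SimpleGraph.Walk.cons hadj t) hw2len SimpleGraph.Walk.not_nil_cons hw2col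


private def RegGraph {V : Type u} (G : SimpleGraph V) (k : V → ℕ) (idx : V → V → ℕ) :
    SimpleGraph (Σ w : V, ULift.{u} (Fin (k w))) where
  Adj a b := G.Adj a.1 b.1 ∧ a.2.down.val = idx a.1 b.1 % k a.1 ∧
    b.2.down.val = idx b.1 a.1 % k b.1
  symm := ⟨fun a b h => ⟨h.1.symm, h.2.2, h.2.1⟩⟩
  loopless := ⟨fun a h => G.loopless.irrefl a.1 h.1⟩

private lemma regGraph_adj {V : Type u} (G : SimpleGraph V) (k : V → ℕ) (idx : V → V → ℕ)
    (a b : Σ w : V, ULift.{u} (Fin (k w))) :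
    (RegGraph G k idx).Adj a b ↔ G.Adj a.1 b.1 ∧ a.2.down.val = idx a.1 b.1 % k a.1 ∧
      b.2.down.val = idx b.1 a.1 % k b.1 := Iff.rfl

private lemma regGraph_ncard {V : Type u} (G : SimpleGraph V) (k : V → ℕ) (idx : V → V → ℕ)
    (d : V → ℕ) (hkpos : ∀ w : V, 0 < k w)
    (hidxlt : ∀ w u : V, G.Adj w u → idx w u < d w)
    (hidxinj : ∀ w u1 u2 : V, G.Adj w u1 → G.Adj w u2 → idx w u1 = idx w u2 → u1 = u2)
    (hidxsurj : ∀ w : V, ∀ t : ℕ, t < d w → ∃ u : V, G.Adj w u ∧ idx w u = t)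
    (w : V) (i : ULift.{u} (Fin (k w))) :
    Nat.card ((RegGraph G k idx).neighborSet ⟨w, i⟩)
      = ((Finset.range (d w)).filter (fun t => t % k w = i.down.val)).card := by
  classical
  set T := (Finset.range (d w)).filter (fun t => t % k w = i.down.val) with hT
  have hf : ∀ b : (RegGraph G k idx).neighborSet ⟨w, i⟩, idx w b.1.1 ∈ T := by
    rintro ⟨⟨u, j⟩, hb⟩
    obtain ⟨h1, h2, h3⟩ := hb
    simp only [hT, Finset.mem_filter, Finset.mem_range]
    exact ⟨hidxlt w u h1, h2.symm⟩
  let f : (RegGraph G k idx).neighborSet ⟨w, i⟩ → {t // t ∈ T} := fun b => ⟨idx w b.1.1, hf b⟩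
  have hbij : Function.Bijective f := by
    constructor
    · rintro ⟨⟨u1, j1⟩, hb1⟩ ⟨⟨u2, j2⟩, hb2⟩ hval
      simp only [f, Subtype.mk.injEq] at hval
      obtain ⟨ha1, hc1, hd1⟩ := hb1
      obtain ⟨ha2, hc2, hd2⟩ := hb2
      have hu : u1 = u2 := hidxinj w u1 u2 ha1 ha2 hval
      subst hu
      have hj : j1 = j2 := by
        cases j1; cases j2
        exact congrArg ULift.up (Fin.ext (hd1.trans hd2.symm))
      subst hj
      rfl
    · rintro ⟨t, ht⟩
      simp only [hT, Finset.mem_filter, Finset.mem_range] at ht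
      obtain ⟨u, hadj, hidxu⟩ := hidxsurj w t ht.1
      refine ⟨⟨⟨u, ⟨⟨idx u w % k u, Nat.mod_lt _ (hkpos u)⟩⟩⟩,
        ⟨hadj, by rw [hidxu]; exact ht.2.symm, rfl⟩⟩, ?_⟩
      simp only [f, Subtype.mk.injEq]
      exact hidxu
  calc Nat.card ((RegGraph G k idx).neighborSet ⟨w, i⟩)
      = Nat.card {t // t ∈ T} := Nat.card_congr (Equiv.ofBijective f hbij)
    _ = T.card := Nat.card_eq_finsetCard T

/-- Let `G` be a graph with a proper edge coloring and minimum degree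
`δ(G) ≥ 1`. Then there exists a graph `G'` with a proper edge coloring such that:
(1) `|V(G)| ≤ |V(G')| ≤ 4·e(G)/δ(G)` and every vertex of `G'` has degree between `δ(G)/2`
and `δ(G)`; and (2) there is a color-preserving graph homomorphism `ψ` from `G'` to `G`.
In particular, if `G'` contains a rainbow cycle, then so does `G`. -/
theorem exists_regularization {V : Type u} {C : Type v} [Fintype V]
    (G : SimpleGraph V) [DecidableRel G.Adj] (φ : Sym2 V → C)
    (hφ : ∀ ⦃a b c : V⦄, G.Adj a b → G.Adj a c → b ≠ c → φ s(a, b) ≠ φ s(a, c))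
    (hδ : 1 ≤ G.minDegree) :
    ∃ (V' : Type u) (_ : Fintype V') (G' : SimpleGraph V') (φ' : Sym2 V' → C),
      (∀ ⦃a b c : V'⦄, G'.Adj a b → G'.Adj a c → b ≠ c → φ' s(a, b) ≠ φ' s(a, c)) ∧
      Fintype.card V ≤ Fintype.card V' ∧
      (Fintype.card V' : ℝ) ≤ 4 * (Nat.card G.edgeSet : ℝ) / (G.minDegree : ℝ) ∧
      (∀ v' : V', G.minDegree ≤ 2 * Nat.card (G'.neighborSet v') ∧
        Nat.card (G'.neighborSet v') ≤ G.minDegree) ∧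
      ∃ ψ : V' → V,
        (∀ ⦃a b : V'⦄, G'.Adj a b → G.Adj (ψ a) (ψ b)) ∧
        (∀ ⦃a b : V'⦄, G'.Adj a b → φ' s(a, b) = φ s(ψ a, ψ b)) ∧
        ((∃ (u : V') (w : G'.Walk u u), w.IsCycle ∧ (w.edges.map φ').Nodup) →
          ∃ (u : V) (w : G.Walk u u), w.IsCycle ∧ (w.edges.map φ).Nodup) := by
  classical
  set δ := G.minDegree with hδdef
  have hδpos : 0 < δ := hδ
  set d : V → ℕ := fun v => G.degree v with hd
  set k : V → ℕ := fun v => (d v + δ - 1) / δ with hk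
  have hdδ : ∀ w : V, δ ≤ d w := fun w => G.minDegree_le_degree w
  have hdpos : ∀ w : V, 0 < d w := fun w => lt_of_lt_of_le hδpos (hdδ w)
  have hkpos : ∀ w : V, 0 < k w := by
    intro w
    apply Nat.div_pos ?_ hδpos
    have := hdpos w
    omega
  have hkd : ∀ w : V, d w ≤ δ * k w := fun w => L1aux δ (d w) hδpos (hdpos w)
  have hkd' : ∀ w : V, δ * k w ≤ d w + δ - 1 := fun w => L2aux δ (d w)
  have hkc : ∀ w : V, k w * ((δ + 1) / 2) ≤ d w := fun w => L3aux δ (d w) hδpos (hdδ w)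
  have hc1 : 1 ≤ (δ + 1) / 2 := (Nat.le_div_iff_mul_le (by norm_num)).mpr (by omega)
  have hcδ : δ ≤ 2 * ((δ + 1) / 2) := by
    have h1 := Nat.div_add_mod (δ + 1) 2
    have h2 : (δ + 1) % 2 < 2 := Nat.mod_lt _ (by norm_num)
    omega
  -- index function
  set nb : V → Finset V := fun w => G.neighborFinset w with hnb
  have hnbcard : ∀ w : V, (nb w).card = d w := fun w => G.card_neighborFinset_eq_degree w
  set idx : V → V → ℕ := fun w u =>
    if h : u ∈ nb w then (((nb w).equivFin ⟨u, h⟩ : Fin (nb w).card) : ℕ) else 0 with hidx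
  have hmemnb : ∀ w u : V, G.Adj w u ↔ u ∈ nb w := by
    intro w u
    rw [hnb]
    exact (SimpleGraph.mem_neighborFinset G w u).symm
  have hidxlt : ∀ w u : V, G.Adj w u → idx w u < d w := by
    intro w u hadj
    have h : u ∈ nb w := (hmemnb w u).mp hadj
    have h2 := ((nb w).equivFin ⟨u, h⟩).isLt
    have h3 : idx w u < (nb w).card := by simpa [hidx, dif_pos h] using h2
    exact lt_of_lt_of_eq h3 (hnbcard w)
  have hidxinj : ∀ w u1 u2 : V, G.Adj w u1 → G.Adj w u2 →
      idx w u1 = idx w u2 → u1 = u2 := by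
    intro w u1 u2 ha1 ha2 h
    have h1 : u1 ∈ nb w := (hmemnb w u1).mp ha1
    have h2 : u2 ∈ nb w := (hmemnb w u2).mp ha2
    simp only [hidx, dif_pos h1, dif_pos h2] at h
    have := (nb w).equivFin.injective (Fin.ext h)
    exact Subtype.ext_iff.mp this
  have hidxsurj : ∀ w : V, ∀ t : ℕ, t < d w → ∃ u : V, G.Adj w u ∧ idx w u = t := by
    intro w t ht
    rw [← hnbcard w] at ht
    refine ⟨((nb w).equivFin.symm ⟨t, ht⟩ : { x // x ∈ nb w }).1,
      (hmemnb w _).mpr ((nb w).equivFin.symm ⟨t, ht⟩).2, ?_⟩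
    simp only [hidx, dif_pos (((nb w).equivFin.symm ⟨t, ht⟩).2)]
    rw [Subtype.eta, Equiv.apply_symm_apply]
  refine ⟨Σ w : V, ULift.{u} (Fin (k w)), inferInstance, RegGraph G k idx,
    fun e => φ (e.map (fun a => a.1)), ?_, ?_, ?_, ?_, ?_⟩
  · -- properness
    intro a b c hab hac hbc
    rw [regGraph_adj] at hab hac
    simp only [Sym2.map_pair_eq]
    by_cases hfst : b.1 = c.1
    · exfalso
      apply hbc
      obtain ⟨bv, bi⟩ := b
      obtain ⟨cv, ci⟩ := c
      simp only at hfst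
      subst hfst
      have hval : bi.down.val = ci.down.val := by
        rw [hab.2.2, hac.2.2]
      have : bi = ci := by
        cases bi; cases ci
        exact congrArg ULift.up (Fin.ext hval)
      rw [this]
    · exact hφ hab.1 hac.1 hfst
  · -- lower card bound
    have h1 : Fintype.card (Σ w : V, ULift.{u} (Fin (k w))) = ∑ w : V, k w := by
      simp [Fintype.card_sigma]
    rw [h1]
    calc Fintype.card V = ∑ _w : V, 1 := by simp
      _ ≤ ∑ w : V, k w := Finset.sum_le_sum (fun w _ => hkpos w)
  · -- upper card bound
    have h1 : Fintype.card (Σ w : V, ULift.{u} (Fin (k w))) = ∑ w : V, k w := by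
      simp [Fintype.card_sigma]
    have hE : Nat.card G.edgeSet = G.edgeFinset.card := by
      rw [Nat.card_coe_set_eq, Set.ncard_eq_toFinset_card']
      congr 1
    have hsum : (∑ w : V, k w) * δ ≤ 4 * G.edgeFinset.card := by
      rw [Finset.sum_mul]
      calc ∑ w : V, k w * δ ≤ ∑ w : V, 2 * d w := by
            refine Finset.sum_le_sum (fun w _ => ?_)
            have h5 := hkd' w
            have h6 := hdδ w
            have h7 : k w * δ = δ * k w := mul_comm _ _
            omega
        _ = 2 * ∑ w : V, d w := by rw [Finset.mul_sum]
        _ = 2 * (2 * G.edgeFinset.card) := by rw [hd, G.sum_degrees_eq_twice_card_edges]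
        _ = 4 * G.edgeFinset.card := by ring
    rw [h1, hE, le_div_iff₀ (by exact_mod_cast hδpos)]
    exact_mod_cast hsum
  · -- degree bounds
    rintro ⟨w, i⟩
    rw [regGraph_ncard G k idx d hkpos hidxlt hidxinj hidxsurj w i]
    constructor
    · refine (Ldiv_ge δ (d w) (k w) ((δ + 1) / 2) (hkpos w) (hkc w) hcδ).trans ?_
      have := Lcount_lower (d w) (k w) i.down.val (hkpos w) i.down.isLt
      omega
    · refine (Lcount_upper (d w) (k w) i.down.val (hkpos w)).trans ?_
      refine Ldiv_le δ (d w) (k w) (hkpos w) ?_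
      have h7 : k w * δ = δ * k w := mul_comm _ _
      have := hkd w
      omega
  · -- homomorphism and rainbow cycle transfer
    refine ⟨fun a => a.1, fun a b hab => hab.1, fun a b _ => by simp [Sym2.map_pair_eq], ?_⟩
    rintro ⟨u0, w0, hcyc, hcol⟩
    let F : RegGraph G k idx →g G := ⟨fun a => a.1, fun {a b} h => h.1⟩
    have hlen : (w0.map F).length = w0.length := by simp
    apply Lrainbow φ (w0.map F).length u0.1 (w0.map F) le_rfl
    · rw [SimpleGraph.Walk.not_nil_iff_lt_length, hlen]
      have := hcyc.three_le_length
      omega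
    · rw [SimpleGraph.Walk.edges_map, List.map_map]
      exact hcol
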